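/- Let α ∈ (0, π/2) and l₂ > 0 be real numbers, and for 0 < l₁ < l₂ set τ(l₁) = π sin α · sqrt( 2 (l₂² − l₁²) ) / sqrt( log(l₂/l₁) ) and define the geometrically regularized torsion Υ(l₁) = τ(l₁) · sqrt( l₂ · log(l₂/l₁) ) / sqrt( 2π l₂ sin α ). Then Υ(l₁) = sqrt( π (l₂² − l₁²) sin α ) for every 0 < l₁ < l₂, and lim_{l₁ → 0⁺} Υ(l₁) = sqrt( π l₂² sin α ). -/

import Mathlib

open Real Filter

lemma aux_eq (α l₂ : ℝ) (hα : α ∈ Set.Ioo 0 (π / 2)) (hl₂ : 0 < l₂) :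
    ∀ l₁ : ℝ, 0 < l₁ → l₁ < l₂ →
      (π * Real.sin α * Real.sqrt (2 * (l₂ ^ 2 - l₁ ^ 2)) / Real.sqrt (Real.log (l₂ / l₁))) *
          Real.sqrt (l₂ * Real.log (l₂ / l₁)) / Real.sqrt (2 * π * l₂ * Real.sin α) =
        Real.sqrt (π * (l₂ ^ 2 - l₁ ^ 2) * Real.sin α) := by
  intro l₁ h1 h12
  have hs : 0 < Real.sin α := Real.sin_pos_of_pos_of_lt_pi hα.1 (by linarith [hα.2, Real.pi_pos])
  have hL : 0 < Real.log (l₂ / l₁) := Real.log_pos ((one_lt_div h1).2 h12)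
  have hA : 0 < l₂ ^ 2 - l₁ ^ 2 := by nlinarith
  have hπ := Real.pi_pos
  have h0 : π * Real.sin α = Real.sqrt ((π * Real.sin α) ^ 2) :=
    (Real.sqrt_sq (by positivity)).symm
  rw [h0, ← Real.sqrt_mul (by positivity), ← Real.sqrt_div (by positivity),
    ← Real.sqrt_mul (by positivity), ← Real.sqrt_div (by positivity)]
  congr 1
  field_simp

/-- For `α ∈ (0, π/2)`, `l₂ > 0` and `0 < l₁ < l₂`, let
`τ(l₁) = π sin α √(2(l₂² − l₁²))/√(log(l₂/l₁))` be the Reidemeister torsion of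
the frustum and
`Υ(l₁) = τ(l₁) √(l₂ log(l₂/l₁)) / √(2π l₂ sin α)` the geometrically regularized
torsion.  Then `Υ(l₁) = √(π (l₂² − l₁²) sin α)` for every `0 < l₁ < l₂`, and
`lim_{l₁→0⁺} Υ(l₁) = √(π l₂² sin α)`. -/
theorem statement_9 (α l₂ : ℝ) (hα : α ∈ Set.Ioo 0 (π / 2)) (hl₂ : 0 < l₂) :
    (∀ l₁ : ℝ, 0 < l₁ → l₁ < l₂ →
      (π * Real.sin α * Real.sqrt (2 * (l₂ ^ 2 - l₁ ^ 2)) / Real.sqrt (Real.log (l₂ / l₁))) *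
          Real.sqrt (l₂ * Real.log (l₂ / l₁)) / Real.sqrt (2 * π * l₂ * Real.sin α) =
        Real.sqrt (π * (l₂ ^ 2 - l₁ ^ 2) * Real.sin α)) ∧
    Tendsto
      (fun l₁ : ℝ =>
        (π * Real.sin α * Real.sqrt (2 * (l₂ ^ 2 - l₁ ^ 2)) / Real.sqrt (Real.log (l₂ / l₁))) *
          Real.sqrt (l₂ * Real.log (l₂ / l₁)) / Real.sqrt (2 * π * l₂ * Real.sin α))
      (nhdsWithin 0 (Set.Ioo 0 l₂))
      (nhds (Real.sqrt (π * l₂ ^ 2 * Real.sin α))) := by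
  refine ⟨aux_eq α l₂ hα hl₂, ?_⟩
  have heq : ∀ᶠ x in nhdsWithin 0 (Set.Ioo 0 l₂),
      (π * Real.sin α * Real.sqrt (2 * (l₂ ^ 2 - x ^ 2)) / Real.sqrt (Real.log (l₂ / x))) *
          Real.sqrt (l₂ * Real.log (l₂ / x)) / Real.sqrt (2 * π * l₂ * Real.sin α) =
        Real.sqrt (π * (l₂ ^ 2 - x ^ 2) * Real.sin α) := by
    filter_upwards [self_mem_nhdsWithin] with x hx
    exact aux_eq α l₂ hα hl₂ x hx.1 hx.2
  refine Tendsto.congr' (heq.mono fun x h => h.symm) ?_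
  have : ContinuousAt (fun x : ℝ => Real.sqrt (π * (l₂ ^ 2 - x ^ 2) * Real.sin α)) 0 := by
    fun_prop
  simpa using this.continuousWithinAt.tendsto
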